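/- Let L_d : E × E → ℝ be differentiable and let A : E →L[ℝ] E be a continuous linear operator such that L_d is invariant under the one-parameter group generated by A: L_d(exp(tA) q0, exp(tA) q1) = L_d(q0,q1) for all t ∈ ℝ and all q0, q1 ∈ E, where exp(tA) is the exponential of the operator tA. Then for all q0, q1 ∈ E, D₁L_d(q0,q1)(A q0) + D₂L_d(q0,q1)(A q1) = 0; equivalently, the two expressions D₂L_d(q0,q1)(A q1) and −D₁L_d(q0,q1)(A q0) defining the discrete momentum map agree. -/

import Mathlib

open ContinuousLinearMap

variable {E : Type*} [NormedAddCommGroup E] [NormedSpace ℝ E] [FiniteDimensional ℝ E]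

/-- Partial Fréchet derivative in the first variable. -/
noncomputable def D1 (L : E × E → ℝ) (x : E × E) : E →L[ℝ] ℝ :=
  fderiv ℝ (fun a => L (a, x.2)) x.1

/-- Partial Fréchet derivative in the second variable. -/
noncomputable def D2 (L : E × E → ℝ) (x : E × E) : E →L[ℝ] ℝ :=
  fderiv ℝ (fun b => L (x.1, b)) x.2

theorem discrete_momentum_well_defined
    (Ld : E × E → ℝ) (hLd : Differentiable ℝ Ld) (A : E →L[ℝ] E)
    (hinv : ∀ (t : ℝ) (q0 q1 : E),
      Ld (NormedSpace.exp (t • A) q0, NormedSpace.exp (t • A) q1) = Ld (q0, q1)) :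
    ∀ q0 q1 : E, D1 Ld (q0, q1) (A q0) + D2 Ld (q0, q1) (A q1) = 0 := by
  intro q0 q1
  -- derivative of t ↦ exp(tA) in the operator algebra at 0 is A
  have hexp : HasDerivAt (fun t : ℝ => NormedSpace.exp (t • A)) A 0 := by
    simpa using hasDerivAt_exp_smul_const (𝕂 := ℝ) A 0
  have hflow : ∀ q : E,
      HasDerivAt (fun t : ℝ => NormedSpace.exp (t • A) q) (A q) 0 := by
    intro q
    have := (ContinuousLinearMap.apply ℝ E q).hasFDerivAt.comp_hasDerivAt 0 hexp
    exact this
  -- the composed curve is constant, so its derivative is 0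
  have hD : HasFDerivAt Ld (fderiv ℝ Ld (q0, q1)) (q0, q1) := (hLd (q0, q1)).hasFDerivAt
  have hcurve : HasDerivAt
      (fun t : ℝ => Ld (NormedSpace.exp (t • A) q0, NormedSpace.exp (t • A) q1))
      (fderiv ℝ Ld (q0, q1) (A q0, A q1)) 0 := by
    have h0 : (NormedSpace.exp ((0:ℝ) • A) q0, NormedSpace.exp ((0:ℝ) • A) q1)
        = (q0, q1) := by simp
    have := (h0 ▸ hD).comp_hasDerivAt 0 ((hflow q0).prodMk (hflow q1))
    rw [h0] at this; exact this
  have hconst : HasDerivAt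
      (fun t : ℝ => Ld (NormedSpace.exp (t • A) q0, NormedSpace.exp (t • A) q1))
      (0 : ℝ) 0 := by
    have : (fun t : ℝ => Ld (NormedSpace.exp (t • A) q0, NormedSpace.exp (t • A) q1))
        = fun _ => Ld (q0, q1) := funext fun t => hinv t q0 q1
    rw [this]; exact hasDerivAt_const 0 _
  have hzero : fderiv ℝ Ld (q0, q1) (A q0, A q1) = 0 :=
    hcurve.unique hconst
  -- express D1, D2 via the total derivative
  have h1 : D1 Ld (q0, q1) = (fderiv ℝ Ld (q0, q1)).comp (inl ℝ E E) := by
    have : HasFDerivAt (fun a : E => Ld (a, q1))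
        ((fderiv ℝ Ld (q0, q1)).comp (inl ℝ E E)) q0 :=
      hD.comp q0 (hasFDerivAt_prodMk_left q0 q1)
    exact this.fderiv
  have h2 : D2 Ld (q0, q1) = (fderiv ℝ Ld (q0, q1)).comp (inr ℝ E E) := by
    have : HasFDerivAt (fun b : E => Ld (q0, b))
        ((fderiv ℝ Ld (q0, q1)).comp (inr ℝ E E)) q1 :=
      hD.comp q1 (hasFDerivAt_prodMk_right q0 q1)
    exact this.fderiv
  have : D1 Ld (q0, q1) (A q0) + D2 Ld (q0, q1) (A q1)
      = fderiv ℝ Ld (q0, q1) (A q0, A q1) := by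
    rw [h1, h2]
    simp only [comp_apply, inl_apply, inr_apply]
    rw [← map_add]
    congr 1
    simp
  rw [this, hzero]
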